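/- The curve γ̃(x,t) = (tanh(kx + k³t), x·tanh(kx + k³t) - 1/k)ᵗ satisfies det(γ̃, γ̃_x) = 1, its central affine curvature is q̃(x,t) = -2k²·sech²(kx + k³t) (i.e., γ̃_{xx} = q̃·γ̃), and γ̃ solves the central affine curve flow γ̃_t = (1/4)q̃_x·γ̃ - (1/2)q̃·γ̃_x. -/

import Mathlib

open Real

/-- Determinant of the 2×2 matrix with columns `u`, `v`. -/
noncomputable def det2 (u v : Fin 2 → ℝ) : ℝ := u 0 * v 1 - u 1 * v 0

/-- Partial derivative in the first (space) variable. -/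
noncomputable def pdx {E : Type*} [NormedAddCommGroup E] [NormedSpace ℝ E]
    (f : ℝ → ℝ → E) : ℝ → ℝ → E := fun x t => deriv (fun y => f y t) x

/-- Partial derivative in the second (time) variable. -/
noncomputable def pdt {E : Type*} [NormedAddCommGroup E] [NormedSpace ℝ E]
    (f : ℝ → ℝ → E) : ℝ → ℝ → E := fun x t => deriv (fun s => f x s) t

/-- The 1-soliton curve `γ̃`. -/
noncomputable def solCurve (k : ℝ) : ℝ → ℝ → Fin 2 → ℝ :=
  fun x t => ![Real.tanh (k * x + k ^ 3 * t),
               x * Real.tanh (k * x + k ^ 3 * t) - 1 / k]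

/-- The 1-soliton curvature `q̃ = -2k² sech²(kx + k³t)`. -/
noncomputable def solQ (k : ℝ) : ℝ → ℝ → ℝ :=
  fun x t => -2 * k ^ 2 * (1 / Real.cosh (k * x + k ^ 3 * t)) ^ 2

lemma tanh_hasDerivAt (x : ℝ) : HasDerivAt Real.tanh (1 / Real.cosh x ^ 2) x := by
  have h := (Real.hasDerivAt_sinh x).div (Real.hasDerivAt_cosh x) (Real.cosh_pos x).ne'
  have e : Real.tanh = fun y => Real.sinh y / Real.cosh y := by
    funext y; exact Real.tanh_eq_sinh_div_cosh y
  rw [e]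
  refine h.congr_deriv ?_
  have := Real.cosh_sq_sub_sinh_sq x
  field_simp
  nlinarith
lemma sech2_hasDerivAt (x : ℝ) :
    HasDerivAt (fun y => 1 / Real.cosh y ^ 2)
      (-(2 * Real.sinh x) / Real.cosh x ^ 3) x := by
  have h := ((Real.hasDerivAt_cosh x).pow 2).inv (pow_ne_zero 2 (Real.cosh_pos x).ne')
  simp only [one_div]
  refine h.congr_deriv ?_
  have hc := (Real.cosh_pos x).ne'
  field_simp
  rw [Pi.pow_apply]; ring

lemma lin_x (k t x : ℝ) : HasDerivAt (fun y => k * y + k ^ 3 * t) k x := by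
  simpa using ((hasDerivAt_id x).const_mul k).add_const (k ^ 3 * t)
lemma lin_t (k x s : ℝ) : HasDerivAt (fun s => k * x + k ^ 3 * s) (k ^ 3) s := by
  simpa using (((hasDerivAt_id s).const_mul (k ^ 3)).const_add (k * x))

lemma pdx_sol (k x t : ℝ) : pdx (solCurve k) x t =
    ![1 / Real.cosh (k * x + k ^ 3 * t) ^ 2 * k,
      Real.tanh (k * x + k ^ 3 * t) + x * (1 / Real.cosh (k * x + k ^ 3 * t) ^ 2 * k)] := by
  have h0 : HasDerivAt (fun y => Real.tanh (k * y + k ^ 3 * t))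
      (1 / Real.cosh (k * x + k ^ 3 * t) ^ 2 * k) x :=
    (tanh_hasDerivAt _).comp x (lin_x k t x)
  have h1 : HasDerivAt (fun y => y * Real.tanh (k * y + k ^ 3 * t) - 1 / k)
      (1 * Real.tanh (k * x + k ^ 3 * t) + x * (1 / Real.cosh (k * x + k ^ 3 * t) ^ 2 * k)) x :=
    ((hasDerivAt_id x).mul h0).sub_const _
  have : HasDerivAt (fun y => solCurve k y t)
      (![1 / Real.cosh (k * x + k ^ 3 * t) ^ 2 * k,
      Real.tanh (k * x + k ^ 3 * t) + x * (1 / Real.cosh (k * x + k ^ 3 * t) ^ 2 * k)]) x := by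
    rw [hasDerivAt_pi]
    intro i
    fin_cases i
    · simpa [solCurve] using h0
    · simpa [solCurve] using h1
  exact this.deriv


lemma pdt_sol (k x t : ℝ) : pdt (solCurve k) x t =
    ![1 / Real.cosh (k * x + k ^ 3 * t) ^ 2 * k ^ 3,
      x * (1 / Real.cosh (k * x + k ^ 3 * t) ^ 2 * k ^ 3)] := by
  have h0 : HasDerivAt (fun s => Real.tanh (k * x + k ^ 3 * s))
      (1 / Real.cosh (k * x + k ^ 3 * t) ^ 2 * k ^ 3) t :=
    (tanh_hasDerivAt _).comp t (lin_t k x t)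
  have h1 : HasDerivAt (fun s => x * Real.tanh (k * x + k ^ 3 * s) - 1 / k)
      (x * (1 / Real.cosh (k * x + k ^ 3 * t) ^ 2 * k ^ 3)) t :=
    (h0.const_mul x).sub_const _
  have : HasDerivAt (fun s => solCurve k x s)
      (![1 / Real.cosh (k * x + k ^ 3 * t) ^ 2 * k ^ 3,
      x * (1 / Real.cosh (k * x + k ^ 3 * t) ^ 2 * k ^ 3)]) t := by
    rw [hasDerivAt_pi]
    intro i
    fin_cases i
    · simpa [solCurve] using h0
    · simpa [solCurve] using h1
  exact this.deriv

lemma pdxx_sol (k x t : ℝ) : pdx (pdx (solCurve k)) x t =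
    ![-(2 * Real.sinh (k * x + k ^ 3 * t)) / Real.cosh (k * x + k ^ 3 * t) ^ 3 * k * k,
      1 / Real.cosh (k * x + k ^ 3 * t) ^ 2 * k
        + (1 * (1 / Real.cosh (k * x + k ^ 3 * t) ^ 2 * k)
          + x * (-(2 * Real.sinh (k * x + k ^ 3 * t)) / Real.cosh (k * x + k ^ 3 * t) ^ 3 * k * k))] := by
  have e : (fun y => pdx (solCurve k) y t) = fun y =>
      ![1 / Real.cosh (k * y + k ^ 3 * t) ^ 2 * k,
        Real.tanh (k * y + k ^ 3 * t) + y * (1 / Real.cosh (k * y + k ^ 3 * t) ^ 2 * k)] := by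
    funext y; exact pdx_sol k y t
  have hs : HasDerivAt (fun y => 1 / Real.cosh (k * y + k ^ 3 * t) ^ 2 * k)
      (-(2 * Real.sinh (k * x + k ^ 3 * t)) / Real.cosh (k * x + k ^ 3 * t) ^ 3 * k * k) x := by
    have := ((sech2_hasDerivAt (k * x + k ^ 3 * t)).comp x (lin_x k t x)).mul_const k
    exact this
  have h0' : HasDerivAt (fun y => Real.tanh (k * y + k ^ 3 * t))
      (1 / Real.cosh (k * x + k ^ 3 * t) ^ 2 * k) x :=
    (tanh_hasDerivAt _).comp x (lin_x k t x)
  have h1 : HasDerivAt (fun y => Real.tanh (k * y + k ^ 3 * t)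
      + y * (1 / Real.cosh (k * y + k ^ 3 * t) ^ 2 * k))
      (1 / Real.cosh (k * x + k ^ 3 * t) ^ 2 * k
        + (1 * (1 / Real.cosh (k * x + k ^ 3 * t) ^ 2 * k)
          + x * (-(2 * Real.sinh (k * x + k ^ 3 * t)) / Real.cosh (k * x + k ^ 3 * t) ^ 3 * k * k))) x :=
    h0'.add ((hasDerivAt_id x).mul hs)
  show deriv (fun y => pdx (solCurve k) y t) x = _
  rw [e]
  have : HasDerivAt (fun y =>
      (![1 / Real.cosh (k * y + k ^ 3 * t) ^ 2 * k,
        Real.tanh (k * y + k ^ 3 * t) + y * (1 / Real.cosh (k * y + k ^ 3 * t) ^ 2 * k)] : Fin 2 → ℝ))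
      (![-(2 * Real.sinh (k * x + k ^ 3 * t)) / Real.cosh (k * x + k ^ 3 * t) ^ 3 * k * k,
      1 / Real.cosh (k * x + k ^ 3 * t) ^ 2 * k
        + (1 * (1 / Real.cosh (k * x + k ^ 3 * t) ^ 2 * k)
          + x * (-(2 * Real.sinh (k * x + k ^ 3 * t)) / Real.cosh (k * x + k ^ 3 * t) ^ 3 * k * k))]) x := by
    rw [hasDerivAt_pi]
    intro i
    fin_cases i
    · simpa using hs
    · simpa using h1
  exact this.deriv

lemma pdx_solQ (k x t : ℝ) : pdx (solQ k) x t =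
    -(2 * Real.sinh (k * x + k ^ 3 * t)) / Real.cosh (k * x + k ^ 3 * t) ^ 3 * k * (-2 * k ^ 2) := by
  have e : (fun y => solQ k y t) = fun y =>
      -2 * k ^ 2 * (1 / Real.cosh (k * y + k ^ 3 * t) ^ 2) := by
    funext y; simp [solQ, div_pow]
  show deriv (fun y => solQ k y t) x = _
  rw [e]
  have h := ((sech2_hasDerivAt (k * x + k ^ 3 * t)).comp x (lin_x k t x)).const_mul (-2 * k ^ 2)
  simp only [Function.comp_def] at h
  rw [h.deriv]; ring

theorem one_soliton_curve (k : ℝ) (hk : k ≠ 0) :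
    (∀ x t, det2 (solCurve k x t) (pdx (solCurve k) x t) = 1) ∧
    (∀ x t, pdx (pdx (solCurve k)) x t = solQ k x t • solCurve k x t) ∧
    (∀ x t, pdt (solCurve k) x t
      = ((1/4) * pdx (solQ k) x t) • solCurve k x t
        - ((1/2) * solQ k x t) • pdx (solCurve k) x t) := by
  have key : ∀ w : ℝ, Real.cosh w ^ 2 - Real.sinh w ^ 2 = 1 := Real.cosh_sq_sub_sinh_sq
  refine ⟨?_, ?_, ?_⟩
  · intro x t
    set w := k * x + k ^ 3 * t with hw
    have hc := (Real.cosh_pos w).ne'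
    rw [pdx_sol]
    simp only [det2, solCurve, Matrix.cons_val_zero, Matrix.cons_val_one, Matrix.head_cons]
    rw [Real.tanh_eq_sinh_div_cosh]
    field_simp
    linear_combination (-(Real.cosh (k * (x + k ^ 2 * t)))) * key (k * (x + k ^ 2 * t))
  · intro x t
    set w := k * x + k ^ 3 * t with hw
    have hc := (Real.cosh_pos w).ne'
    rw [pdxx_sol]
    funext i
    fin_cases i <;>
      simp only [solQ, solCurve, Pi.smul_apply, smul_eq_mul, Matrix.cons_val_zero,
        Matrix.cons_val_one, Matrix.head_cons, Fin.zero_eta, Fin.mk_one, ← hw] <;>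
      rw [Real.tanh_eq_sinh_div_cosh] <;> field_simp <;> nlinarith [key w]
  · intro x t
    set w := k * x + k ^ 3 * t with hw
    have hc := (Real.cosh_pos w).ne'
    rw [pdt_sol, pdx_sol, pdx_solQ]
    funext i
    fin_cases i
    · simp only [solQ, solCurve, Pi.smul_apply, Pi.sub_apply, smul_eq_mul, Matrix.cons_val_zero,
        Matrix.cons_val_one, Matrix.head_cons, Fin.zero_eta, Fin.mk_one, ← hw]
      rw [Real.tanh_eq_sinh_div_cosh]
      field_simp
      linear_combination 4 * key w
    · simp only [solQ, solCurve, Pi.smul_apply, Pi.sub_apply, smul_eq_mul, Matrix.cons_val_zero,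
        Matrix.cons_val_one, Matrix.head_cons, Fin.zero_eta, Fin.mk_one, ← hw]
      rw [Real.tanh_eq_sinh_div_cosh]
      field_simp
      linear_combination (4 * x * k) * key w
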